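/- Let n, d ≥ 1, ξ₀ ∈ ℤⁿ∖{0}, and let a₀, a₁ assign to each x ∈ ℝⁿ and ξ ∈ ℝⁿ∖{0} a d×d complex matrix. Assume: a₀ is positively 0-homogeneous in ξ (a₀(x, sξ) = a₀(x, ξ) for all s > 0) and there is L > 0 with ‖a₀(x,ξ) − a₀(x,η)‖ ≤ L‖ξ − η‖ for all x and all ξ, η in the ball of radius 1/2 around ξ₀; and there is C₁ > 0 with ‖a₁(x,ξ)‖ ≤ C₁/‖ξ‖ for all x and all ξ with ‖ξ‖ ≥ 1. Let S ⊂ ℤⁿ be a finite set, b̂_k ∈ ℂᵈ for k ∈ S, b(x) = Σ_{k∈S} b̂_k e^{i k·x}, and f_N(x) = b(x) e^{i N ξ₀·x} for N ∈ ℕ. Define the pseudodifferential operator A on trigonometric polynomials f(x) = Σ_k f̂(k) e^{i k·x} by (A f)(x) = Σ_{k ∈ ℤⁿ∖{0}} (a₀ + a₁)(x, k) f̂(k) e^{i k·x}. Then there exist C > 0 and N₀ ∈ ℕ such that for all N ≥ N₀ and all x ∈ ℝⁿ, ‖(A f_N)(x) − a₀(x, ξ₀) b(x) e^{i N ξ₀·x}‖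 ≤ C/N. -/

import Mathlib

/-- Euclidean norm of a complex vector. -/
noncomputable def ecnorm {d : ℕ} (v : Fin d → ℂ) : ℝ :=
  Real.sqrt (∑ j, ‖v j‖ ^ 2)

/-- Euclidean norm of a real vector. -/
noncomputable def ernorm {n : ℕ} (v : Fin n → ℝ) : ℝ :=
  Real.sqrt (∑ i, v i ^ 2)

/-- Operator (Euclidean) norm of a complex `d × d` matrix. -/
noncomputable def mopnorm {d : ℕ} (M : Matrix (Fin d) (Fin d) ℂ) : ℝ :=
  ‖LinearMap.toContinuousLinearMap (Matrix.toEuclideanLin M)‖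

lemma ecnorm_eq {d : ℕ} (v : Fin d → ℂ) :
    ecnorm v = ‖(WithLp.equiv 2 (Fin d → ℂ)).symm v‖ := by
  simp [ecnorm, EuclideanSpace.norm_eq]

lemma ernorm_eq {n : ℕ} (v : Fin n → ℝ) :
    ernorm v = ‖(WithLp.equiv 2 (Fin n → ℝ)).symm v‖ := by
  simp [ernorm, EuclideanSpace.norm_eq, Real.norm_eq_abs, sq_abs]

lemma mulVec_le {d : ℕ} (M : Matrix (Fin d) (Fin d) ℂ) (v : Fin d → ℂ) :
    ecnorm (M.mulVec v) ≤ mopnorm M * ecnorm v := by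
  rw [ecnorm_eq, ecnorm_eq]
  have h := (LinearMap.toContinuousLinearMap (Matrix.toEuclideanLin M)).le_opNorm
    ((WithLp.equiv 2 (Fin d → ℂ)).symm v)
  exact h

lemma ecnorm_sum_le {d : ℕ} {α : Type*} (s : Finset α) (f : α → Fin d → ℂ) :
    ecnorm (∑ k ∈ s, f k) ≤ ∑ k ∈ s, ecnorm (f k) := by
  simp only [ecnorm_eq]
  have : (WithLp.equiv 2 (Fin d → ℂ)).symm (∑ k ∈ s, f k)
      = ∑ k ∈ s, (WithLp.equiv 2 (Fin d → ℂ)).symm (f k) := WithLp.toLp_sum (p := 2) (s := s) (f := f)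
  rw [this]
  exact norm_sum_le _ _

lemma ecnorm_smul {d : ℕ} (c : ℂ) (v : Fin d → ℂ) :
    ecnorm (c • v) = ‖c‖ * ecnorm v := by
  simp only [ecnorm_eq]
  have : (WithLp.equiv 2 (Fin d → ℂ)).symm (c • v)
      = c • (WithLp.equiv 2 (Fin d → ℂ)).symm v := rfl
  rw [this, norm_smul]

lemma ernorm_smul {n : ℕ} (c : ℝ) (v : Fin n → ℝ) :
    ernorm (c • v) = |c| * ernorm v := by
  simp only [ernorm_eq]
  have : (WithLp.equiv 2 (Fin n → ℝ)).symm (c • v)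
      = c • (WithLp.equiv 2 (Fin n → ℝ)).symm v := rfl
  rw [this, norm_smul, Real.norm_eq_abs]

lemma ernorm_nonneg {n : ℕ} (v : Fin n → ℝ) : 0 ≤ ernorm v := Real.sqrt_nonneg _

lemma ecnorm_nonneg {d : ℕ} (v : Fin d → ℂ) : 0 ≤ ecnorm v := Real.sqrt_nonneg _

lemma ernorm_add_ge {n : ℕ} (u w : Fin n → ℝ) :
    ernorm u - ernorm w ≤ ernorm (u + w) := by
  simp only [ernorm_eq]
  have : (WithLp.equiv 2 (Fin n → ℝ)).symm (u + w)
      = (WithLp.equiv 2 (Fin n → ℝ)).symm u + (WithLp.equiv 2 (Fin n → ℝ)).symm w := rfl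
  rw [this]
  have := norm_add_le ((WithLp.equiv 2 (Fin n → ℝ)).symm u + (WithLp.equiv 2 (Fin n → ℝ)).symm w)
    (-(WithLp.equiv 2 (Fin n → ℝ)).symm w)
  simp only [WithLp.equiv_symm_apply] at this ⊢
  simp at this
  linarith [this]

lemma ernorm_eq_zero {n : ℕ} (v : Fin n → ℝ) (h : ernorm v = 0) : v = 0 := by
  rw [ernorm_eq] at h
  have : (WithLp.equiv 2 (Fin n → ℝ)).symm v = 0 := norm_eq_zero.mp h
  exact congrArg (WithLp.equiv 2 (Fin n → ℝ)) this

lemma mopnorm_add_le {d : ℕ} (A B : Matrix (Fin d) (Fin d) ℂ) :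
    mopnorm (A + B) ≤ mopnorm A + mopnorm B := by
  unfold mopnorm
  rw [map_add, map_add]
  exact norm_add_le _ _

lemma one_le_ernorm_int {n : ℕ} (ξ : Fin n → ℤ) (h : ξ ≠ 0) :
    1 ≤ ernorm (fun i => (ξ i : ℝ)) := by
  obtain ⟨i, hi⟩ : ∃ i, ξ i ≠ 0 := by
    by_contra hc
    push_neg at hc
    exact h (funext hc)
  have h1 : (1:ℝ) ≤ ((ξ i : ℝ))^2 := by
    have : (1:ℤ) ≤ (ξ i)^2 := by
      rcases lt_or_gt_of_ne hi with h'|h' <;> nlinarith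
    exact_mod_cast this
  have h2 : ((ξ i:ℝ))^2 ≤ ∑ j, ((ξ j : ℝ))^2 :=
    Finset.single_le_sum (f := fun j => ((ξ j:ℝ))^2) (fun j _ => sq_nonneg _) (Finset.mem_univ i)
  unfold ernorm
  rw [show (1:ℝ) = Real.sqrt 1 from (Real.sqrt_one).symm]
  exact Real.sqrt_le_sqrt (by linarith)

lemma ernorm_zero {n : ℕ} : ernorm (0 : Fin n → ℝ) = 0 := by simp [ernorm]

lemma exists_bound {α : Type*} (s : Finset α) (g : α → ℝ) (h0 : ∀ a, 0 ≤ g a) :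
    ∃ K : ℝ, 0 ≤ K ∧ ∀ a ∈ s, g a ≤ K :=
  ⟨∑ a ∈ s, g a, Finset.sum_nonneg fun a _ => h0 a,
    fun a ha => Finset.single_le_sum (fun b _ => h0 b) ha⟩


/-- Sharpened shortwave asymptotics: for a semiclassical symbol
`a = a₀ + a₁` (`a₀` 0-homogeneous and Lipschitz near `ξ₀`, `‖a₁(x,ξ)‖ ≤ C₁/‖ξ‖`),
the discrete pseudodifferential operator `A` applied to the wavelet
`f_N(x) = b(x) e^{iNξ₀·x}` (with `b` a trigonometric polynomial) satisfies
`A f_N(x) = a₀(x,ξ₀) b(x) e^{iNξ₀·x} + O(1/N)` uniformly in `x`. -/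
theorem stmt_12 {n d : ℕ}
    (ξ₀ : Fin n → ℤ) (hξ₀ : ξ₀ ≠ 0)
    (a₀ a₁ : (Fin n → ℝ) → (Fin n → ℝ) → Matrix (Fin d) (Fin d) ℂ)
    (hhom : ∀ (x ξ : Fin n → ℝ) (s : ℝ), 0 < s → a₀ x (s • ξ) = a₀ x ξ)
    (L : ℝ) (hL : 0 < L)
    (hlip : ∀ (x ξ η : Fin n → ℝ),
      ernorm (ξ - fun i => (ξ₀ i : ℝ)) ≤ 1 / 2 →
      ernorm (η - fun i => (ξ₀ i : ℝ)) ≤ 1 / 2 →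
      mopnorm (a₀ x ξ - a₀ x η) ≤ L * ernorm (ξ - η))
    (C₁ : ℝ) (hC₁ : 0 < C₁)
    (ha₁ : ∀ (x ξ : Fin n → ℝ), 1 ≤ ernorm ξ → mopnorm (a₁ x ξ) ≤ C₁ / ernorm ξ)
    (S : Finset (Fin n → ℤ)) (bhat : (Fin n → ℤ) → Fin d → ℂ) :
    ∃ C > (0:ℝ), ∃ N₀ : ℕ, ∀ N : ℕ, N₀ ≤ N → ∀ x : Fin n → ℝ,
      ecnorm (fun j =>
        (∑ k ∈ S,
          if (k + (N : ℤ) • ξ₀) = 0 then 0 else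
            Complex.exp (Complex.I * ∑ i, ((k i + (N : ℤ) * ξ₀ i : ℤ) : ℂ) * (x i : ℂ)) *
            ((a₀ x (fun i => ((k i + (N : ℤ) * ξ₀ i : ℤ) : ℝ))
              + a₁ x (fun i => ((k i + (N : ℤ) * ξ₀ i : ℤ) : ℝ))).mulVec (bhat k)) j)
        - Complex.exp (Complex.I * (N : ℂ) * ∑ i, ((ξ₀ i : ℤ) : ℂ) * (x i : ℂ)) *
            ((a₀ x fun i => (ξ₀ i : ℝ)).mulVec
              (fun j' => ∑ k ∈ S,
                Complex.exp (Complex.I * ∑ i, ((k i : ℤ) : ℂ) * (x i : ℂ)) * bhat k j')) j)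
      ≤ C / N := by

  classical
  set ξr : Fin n → ℝ := fun i => (ξ₀ i : ℝ) with hξr
  obtain ⟨K, hK0, hKk⟩ := exists_bound S (fun k => ernorm (fun i => (k i : ℝ)))
    (fun _ => ernorm_nonneg _)
  set B : ℝ := ∑ k ∈ S, ecnorm (bhat k) with hBdef
  have hB0 : 0 ≤ B := Finset.sum_nonneg fun k _ => ecnorm_nonneg _
  have hCpos : (0:ℝ) < (L*K + 2*C₁)*B + 1 := by
    have h1 : 0 ≤ (L*K + 2*C₁)*B := mul_nonneg (by nlinarith) hB0
    linarith
  refine ⟨(L*K + 2*C₁)*B + 1, hCpos, ⌈2*K⌉₊ + 2, fun N hN x => ?_⟩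
  have hN2 : 2 ≤ N := le_trans (by omega) hN
  have hNR : (2:ℝ) ≤ (N:ℝ) := by exact_mod_cast hN2
  have hNpos : (0:ℝ) < (N:ℝ) := by linarith
  have h2K : 2*K ≤ (N:ℝ) := by
    have h1 : 2*K ≤ (⌈2*K⌉₊ : ℝ) := Nat.le_ceil _
    have h2 : ((⌈2*K⌉₊ : ℕ) : ℝ) ≤ (N:ℝ) := by
      exact_mod_cast le_trans (Nat.le_add_right _ 2) hN
    linarith
  have hξ1 : 1 ≤ ernorm ξr := one_le_ernorm_int ξ₀ hξ₀
  -- per-k facts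
  have key : ∀ k ∈ S,
      ¬ (k + (N:ℤ) • ξ₀ = 0) ∧
      mopnorm ((a₀ x (fun i => ((k i + (N:ℤ) * ξ₀ i : ℤ) : ℝ))
        + a₁ x (fun i => ((k i + (N:ℤ) * ξ₀ i : ℤ) : ℝ))) - a₀ x ξr)
        ≤ (L*K + 2*C₁)/(N:ℝ) := by
    intro k hk
    set vk : Fin n → ℝ := fun i => ((k i + (N:ℤ) * ξ₀ i : ℤ) : ℝ) with hvk
    set kr : Fin n → ℝ := fun i => (k i : ℝ) with hkr
    have hvkdef : vk = kr + (N:ℝ) • ξr := by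
      funext i
      simp only [hvk, hkr, hξr, Pi.add_apply, Pi.smul_apply, smul_eq_mul]
      push_cast; ring
    have hkK : ernorm kr ≤ K := hKk k hk
      -- bound
    have hlow : (N:ℝ)/2 ≤ ernorm vk := by
      have h1 : ernorm ((N:ℝ) • ξr) - ernorm kr ≤ ernorm ((N:ℝ) • ξr + kr) :=
        ernorm_add_ge _ _
      have h2 : ernorm ((N:ℝ) • ξr) = (N:ℝ) * ernorm ξr := by
        rw [ernorm_smul, abs_of_nonneg hNpos.le]
      have h3 : (N:ℝ) * 1 ≤ (N:ℝ) * ernorm ξr :=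
        mul_le_mul_of_nonneg_left hξ1 hNpos.le
      have hcomm : vk = (N:ℝ) • ξr + kr := by rw [hvkdef, add_comm]
      rw [hcomm]
      linarith
    constructor
    · intro hzero
      have hvk0 : vk = 0 := by
        funext i
        have : (k + (N:ℤ) • ξ₀) i = 0 := by rw [hzero]; rfl
        simp only [Pi.add_apply, Pi.smul_apply, smul_eq_mul] at this
        show ((k i + (N:ℤ) * ξ₀ i : ℤ) : ℝ) = 0
        exact_mod_cast this
      rw [hvk0, ernorm_zero] at hlow
      linarith
    · -- split a₀ difference + a₁
      have hhomeq : a₀ x vk = a₀ x ((N:ℝ)⁻¹ • vk) := by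
        have h := hhom x ((N:ℝ)⁻¹ • vk) (N:ℝ) hNpos
        rw [smul_smul, mul_inv_cancel₀ hNpos.ne', one_smul] at h
        exact h
      have hdiffeq : (N:ℝ)⁻¹ • vk - ξr = (N:ℝ)⁻¹ • kr := by
        funext i
        simp only [hvkdef, Pi.sub_apply, Pi.smul_apply, Pi.add_apply, smul_eq_mul]
        field_simp
        ring
      have hsmall : ernorm ((N:ℝ)⁻¹ • vk - ξr) ≤ 1/2 := by
        rw [hdiffeq, ernorm_smul, abs_of_nonneg (by positivity)]
        rw [inv_mul_le_iff₀ hNpos]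
        linarith
      have hzero2 : ernorm (ξr - ξr) ≤ 1/2 := by
        rw [sub_self, ernorm_zero]; norm_num
      have hlipk := hlip x ((N:ℝ)⁻¹ • vk) ξr hsmall hzero2
      have hlipbound : mopnorm (a₀ x vk - a₀ x ξr) ≤ L * K / N := by
        rw [hhomeq]
        calc mopnorm (a₀ x ((N:ℝ)⁻¹ • vk) - a₀ x ξr)
            ≤ L * ernorm ((N:ℝ)⁻¹ • vk - ξr) := hlipk
          _ ≤ L * (K / N) := by
              apply mul_le_mul_of_nonneg_left _ hL.le
              rw [hdiffeq, ernorm_smul, abs_of_nonneg (by positivity),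
                inv_mul_le_iff₀ hNpos]
              have hKK : (N:ℝ) * (K / N) = K := by field_simp
              rw [hKK]; exact hkK
          _ = L * K / N := by ring
      have ha₁k : mopnorm (a₁ x vk) ≤ 2*C₁/N := by
        have h1 : 1 ≤ ernorm vk := by linarith
        calc mopnorm (a₁ x vk) ≤ C₁ / ernorm vk := ha₁ x vk h1
          _ ≤ C₁ / ((N:ℝ)/2) := by
              apply div_le_div_of_nonneg_left hC₁.le (by positivity) hlow
          _ = 2*C₁/N := by field_simp
      have hsplit : (a₀ x vk + a₁ x vk) - a₀ x ξr
          = (a₀ x vk - a₀ x ξr) + a₁ x vk := by abel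
      calc mopnorm ((a₀ x vk + a₁ x vk) - a₀ x ξr)
          = mopnorm ((a₀ x vk - a₀ x ξr) + a₁ x vk) := by rw [hsplit]
        _ ≤ mopnorm (a₀ x vk - a₀ x ξr) + mopnorm (a₁ x vk) := mopnorm_add_le _ _
        _ ≤ L*K/N + 2*C₁/N := add_le_add hlipbound ha₁k
        _ = (L*K + 2*C₁)/N := by ring
  -- rewrite the target vector as a single sum
  set Ek : (Fin n → ℤ) → ℂ := fun k =>
    Complex.exp (Complex.I * ∑ i, ((k i + (N : ℤ) * ξ₀ i : ℤ) : ℂ) * (x i : ℂ)) with hEk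
  set Dk : (Fin n → ℤ) → Matrix (Fin d) (Fin d) ℂ := fun k =>
    (a₀ x (fun i => ((k i + (N:ℤ) * ξ₀ i : ℤ) : ℝ))
      + a₁ x (fun i => ((k i + (N:ℤ) * ξ₀ i : ℤ) : ℝ))) - a₀ x ξr with hDk
  have hexp : ∀ k : Fin n → ℤ,
      Complex.exp (Complex.I * (N : ℂ) * ∑ i, ((ξ₀ i : ℤ) : ℂ) * (x i : ℂ)) *
        Complex.exp (Complex.I * ∑ i, ((k i : ℤ) : ℂ) * (x i : ℂ)) = Ek k := by
    intro k
    rw [hEk, ← Complex.exp_add]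
    congr 1
    have hsum : (∑ i, ((k i + (N : ℤ) * ξ₀ i : ℤ) : ℂ) * (x i : ℂ))
        = (∑ i, ((k i : ℤ) : ℂ) * (x i : ℂ))
          + (N:ℂ) * ∑ i, ((ξ₀ i : ℤ) : ℂ) * (x i : ℂ) := by
      rw [Finset.mul_sum, ← Finset.sum_add_distrib]
      apply Finset.sum_congr rfl
      intro i _
      push_cast; ring
    rw [hsum]; ring
  have habs : ∀ k : Fin n → ℤ, ‖Ek k‖ = 1 := by
    intro k
    simp only [hEk]
    have h : (∑ i, ((k i + (N : ℤ) * ξ₀ i : ℤ) : ℂ) * (x i : ℂ))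
        = (((∑ i, ((k i + (N : ℤ) * ξ₀ i : ℤ) : ℝ) * x i : ℝ)) : ℂ) := by
      push_cast; ring
    rw [h]
    simp [Complex.norm_exp]
  have hfun : (fun j =>
        (∑ k ∈ S,
          if (k + (N : ℤ) • ξ₀) = 0 then 0 else
            Complex.exp (Complex.I * ∑ i, ((k i + (N : ℤ) * ξ₀ i : ℤ) : ℂ) * (x i : ℂ)) *
            ((a₀ x (fun i => ((k i + (N : ℤ) * ξ₀ i : ℤ) : ℝ))
              + a₁ x (fun i => ((k i + (N : ℤ) * ξ₀ i : ℤ) : ℝ))).mulVec (bhat k)) j)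
        - Complex.exp (Complex.I * (N : ℂ) * ∑ i, ((ξ₀ i : ℤ) : ℂ) * (x i : ℂ)) *
            ((a₀ x fun i => (ξ₀ i : ℝ)).mulVec
              (fun j' => ∑ k ∈ S,
                Complex.exp (Complex.I * ∑ i, ((k i : ℤ) : ℂ) * (x i : ℂ)) * bhat k j')) j)
      = ∑ k ∈ S, Ek k • ((Dk k).mulVec (bhat k)) := by
    funext j
    rw [Finset.sum_apply]
    have hA : (∑ k ∈ S,
          if (k + (N : ℤ) • ξ₀) = 0 then 0 else
            Complex.exp (Complex.I * ∑ i, ((k i + (N : ℤ) * ξ₀ i : ℤ) : ℂ) * (x i : ℂ)) *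
            ((a₀ x (fun i => ((k i + (N : ℤ) * ξ₀ i : ℤ) : ℝ))
              + a₁ x (fun i => ((k i + (N : ℤ) * ξ₀ i : ℤ) : ℝ))).mulVec (bhat k)) j)
        = ∑ k ∈ S, Ek k *
            ((a₀ x (fun i => ((k i + (N : ℤ) * ξ₀ i : ℤ) : ℝ))
              + a₁ x (fun i => ((k i + (N : ℤ) * ξ₀ i : ℤ) : ℝ))).mulVec (bhat k)) j := by
      apply Finset.sum_congr rfl
      intro k hk
      rw [if_neg (key k hk).1, hEk]
    rw [hA]
    have hB2 : ((a₀ x fun i => (ξ₀ i : ℝ)).mulVec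
          (fun j' => ∑ k ∈ S,
            Complex.exp (Complex.I * ∑ i, ((k i : ℤ) : ℂ) * (x i : ℂ)) * bhat k j'))
        = ∑ k ∈ S, Complex.exp (Complex.I * ∑ i, ((k i : ℤ) : ℂ) * (x i : ℂ)) •
            ((a₀ x ξr).mulVec (bhat k)) := by
      have hg : (fun j' => ∑ k ∈ S,
            Complex.exp (Complex.I * ∑ i, ((k i : ℤ) : ℂ) * (x i : ℂ)) * bhat k j')
          = ∑ k ∈ S, Complex.exp (Complex.I * ∑ i, ((k i : ℤ) : ℂ) * (x i : ℂ)) • bhat k := by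
        funext j'
        rw [Finset.sum_apply]
        rfl
      rw [hg, hξr]
      rw [show ((a₀ x fun i => (ξ₀ i:ℝ)).mulVec
          (∑ k ∈ S, Complex.exp (Complex.I * ∑ i, ((k i : ℤ) : ℂ) * (x i : ℂ)) • bhat k))
        = (a₀ x fun i => (ξ₀ i:ℝ)).mulVecLin
          (∑ k ∈ S, Complex.exp (Complex.I * ∑ i, ((k i : ℤ) : ℂ) * (x i : ℂ)) • bhat k)
        from rfl]
      rw [map_sum]
      apply Finset.sum_congr rfl
      intro k _
      rw [map_smul]
      rfl
    rw [hB2, Finset.sum_apply]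
    rw [Finset.mul_sum, ← Finset.sum_sub_distrib]
    apply Finset.sum_congr rfl
    intro k hk
    simp only [Pi.smul_apply, smul_eq_mul, hDk, Matrix.sub_mulVec, Pi.sub_apply]
    rw [← hexp k]
    ring
  rw [hfun]
  calc ecnorm (∑ k ∈ S, Ek k • (Dk k).mulVec (bhat k))
      ≤ ∑ k ∈ S, ecnorm (Ek k • (Dk k).mulVec (bhat k)) := ecnorm_sum_le _ _
    _ ≤ ∑ k ∈ S, (L*K + 2*C₁)/N * ecnorm (bhat k) := by
        apply Finset.sum_le_sum
        intro k hk
        rw [ecnorm_smul, habs k, one_mul]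
        calc ecnorm ((Dk k).mulVec (bhat k))
            ≤ mopnorm (Dk k) * ecnorm (bhat k) := mulVec_le _ _
          _ ≤ (L*K + 2*C₁)/N * ecnorm (bhat k) :=
              mul_le_mul_of_nonneg_right (key k hk).2 (ecnorm_nonneg _)
    _ = (L*K + 2*C₁)/N * B := by rw [hBdef, Finset.mul_sum]
    _ ≤ ((L*K + 2*C₁)*B + 1)/N := by
        rw [div_mul_eq_mul_div, div_le_div_iff₀ hNpos hNpos]
        nlinarith
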